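/- For the Gauss hypergeometric function, if Re(c - a - b) > 0 then ₂F₁(a, b; c; 1) = Γ(c)Γ(c−a−b)/(Γ(c−a)Γ(c−b)). -/

import Mathlib

open Complex

/-- The Gauss hypergeometric series `₂F₁(a,b;c;z)` for complex parameters. -/
noncomputable def hyp2F1 (a b c z : ℂ) : ℂ :=
  ∑' n : ℕ, (ascPochhammer ℂ n).eval a * (ascPochhammer ℂ n).eval b /
    ((ascPochhammer ℂ n).eval c * (n.factorial : ℂ)) * z ^ n

open Filter Finset Topology

noncomputable def P (z : ℂ) (n : ℕ) : ℂ := (ascPochhammer ℂ n).eval z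

lemma P_eq_prod (z : ℂ) (n : ℕ) : P z n = ∏ j ∈ Finset.range n, (z + j) := by
  induction n with
  | zero => simp [P]
  | succ n ih => rw [P, ascPochhammer_succ_eval, ← P, ih, Finset.prod_range_succ]

lemma P_zero (z : ℂ) : P z 0 = 1 := by simp [P]

lemma P_succ (z : ℂ) (n : ℕ) : P z (n+1) = P z n * (z + n) := by
  rw [P, ascPochhammer_succ_eval]; rfl

lemma P_succ' (z : ℂ) (n : ℕ) : P z (n+1) = z * P (z+1) n := by
  rw [P_eq_prod, P_eq_prod, Finset.prod_range_succ']
  simp only [Nat.cast_add, Nat.cast_zero, add_zero, Nat.cast_one]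
  rw [mul_comm]
  congr 1
  exact Finset.prod_congr rfl fun j _ => by push_cast; ring

lemma P_ne_zero {z : ℂ} (hz : ∀ j : ℕ, z ≠ -(j:ℂ)) (n : ℕ) : P z n ≠ 0 := by
  rw [P_eq_prod]
  exact Finset.prod_ne_zero_iff.2 fun j _ hj => hz j (eq_neg_of_add_eq_zero_left hj)

noncomputable def T (a b c : ℂ) (n : ℕ) : ℂ := P a n * P b n / (P c n * n.factorial)

lemma GammaSeq_eq (z : ℂ) (n : ℕ) :
    Complex.GammaSeq z n = (n:ℂ) ^ z * n.factorial / P z (n+1) := by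
  rw [Complex.GammaSeq, P_eq_prod]

lemma GammaSeq_ne_zero {z : ℂ} (hz : ∀ j : ℕ, z ≠ -(j:ℂ)) {n : ℕ} (hn : n ≠ 0) :
    Complex.GammaSeq z n ≠ 0 := by
  rw [GammaSeq_eq]
  apply div_ne_zero (mul_ne_zero ?_ (Nat.cast_ne_zero.2 n.factorial_ne_zero)) (P_ne_zero hz _)
  simp [Complex.cpow_eq_zero_iff, Nat.cast_ne_zero.2 hn]

lemma T_succ_eq (a b c : ℂ) (ha : ∀ j : ℕ, a ≠ -(j:ℂ)) (hb : ∀ j : ℕ, b ≠ -(j:ℂ))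
    (hc : ∀ j : ℕ, c ≠ -(j:ℂ)) {n : ℕ} (hn : n ≠ 0) :
    ((n:ℂ)+1) * T a b c (n+1) =
      (n:ℂ) ^ a * (n:ℂ) ^ b * Complex.GammaSeq c n /
        (Complex.GammaSeq a n * Complex.GammaSeq b n * (n:ℂ) ^ c) := by
  have hn0 : (n:ℂ) ≠ 0 := Nat.cast_ne_zero.2 hn
  have hpa := P_ne_zero ha (n+1)
  have hpb := P_ne_zero hb (n+1)
  have hpc := P_ne_zero hc (n+1)
  have hna : (n:ℂ) ^ a ≠ 0 := by simp [Complex.cpow_eq_zero_iff, hn0]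
  have hnb : (n:ℂ) ^ b ≠ 0 := by simp [Complex.cpow_eq_zero_iff, hn0]
  have hnc : (n:ℂ) ^ c ≠ 0 := by simp [Complex.cpow_eq_zero_iff, hn0]
  have hf : ((n.factorial : ℂ)) ≠ 0 := Nat.cast_ne_zero.2 n.factorial_ne_zero
  have hfac : (((n+1).factorial : ℂ)) = ((n:ℂ)+1) * n.factorial := by
    rw [Nat.factorial_succ]; push_cast; ring
  have hn1 : ((n:ℂ)+1) ≠ 0 := by
    have : (((n+1:ℕ)):ℂ) ≠ 0 := Nat.cast_ne_zero.2 (Nat.succ_ne_zero n)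
    push_cast at this; exact this
  rw [eq_div_iff (mul_ne_zero (mul_ne_zero (GammaSeq_ne_zero ha hn)
    (GammaSeq_ne_zero hb hn)) hnc)]
  rw [T, GammaSeq_eq, GammaSeq_eq, GammaSeq_eq, hfac]
  field_simp

lemma norm_nT_bound (a b c : ℂ) (ha : ∀ j : ℕ, a ≠ -(j:ℂ)) (hb : ∀ j : ℕ, b ≠ -(j:ℂ))
    (hc : ∀ j : ℕ, c ≠ -(j:ℂ)) :
    ∃ C : ℝ, 0 ≤ C ∧ ∀ᶠ n : ℕ in atTop,
      ‖((n:ℂ)+1) * T a b c (n+1)‖ ≤ C * (n:ℝ) ^ (-(c-a-b).re) := by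
  set L := ‖Complex.Gamma c / (Complex.Gamma a * Complex.Gamma b)‖ with hLdef
  have hL : Tendsto (fun n : ℕ =>
      ‖Complex.GammaSeq c n / (Complex.GammaSeq a n * Complex.GammaSeq b n)‖) atTop (𝓝 L) :=
    ((Complex.GammaSeq_tendsto_Gamma c).div
      ((Complex.GammaSeq_tendsto_Gamma a).mul (Complex.GammaSeq_tendsto_Gamma b))
      (mul_ne_zero (Complex.Gamma_ne_zero ha) (Complex.Gamma_ne_zero hb))).norm
  refine ⟨L + 1, by positivity, ?_⟩
  filter_upwards [hL.eventually_le_const (lt_add_one L), eventually_ge_atTop 1] with n hn hn1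
  have hnpos : (0:ℝ) < (n:ℝ) := by exact_mod_cast Nat.lt_of_lt_of_le Nat.zero_lt_one hn1
  rw [T_succ_eq a b c ha hb hc (by omega)]
  have hsplit : ‖(n:ℂ)^a * (n:ℂ)^b * Complex.GammaSeq c n /
        (Complex.GammaSeq a n * Complex.GammaSeq b n * (n:ℂ)^c)‖
      = ‖(n:ℂ)^a‖ * ‖(n:ℂ)^b‖ / ‖(n:ℂ)^c‖ *
        ‖Complex.GammaSeq c n / (Complex.GammaSeq a n * Complex.GammaSeq b n)‖ := by
    simp only [norm_div, norm_mul, norm_inv, div_eq_mul_inv, mul_inv]; ring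
  rw [hsplit]
  have hca : ‖(n:ℂ)^a‖ = (n:ℝ) ^ a.re := by
    rw [← Complex.ofReal_natCast,
      Complex.norm_cpow_eq_rpow_re_of_pos hnpos]
  have hcb : ‖(n:ℂ)^b‖ = (n:ℝ) ^ b.re := by
    rw [← Complex.ofReal_natCast,
      Complex.norm_cpow_eq_rpow_re_of_pos hnpos]
  have hcc : ‖(n:ℂ)^c‖ = (n:ℝ) ^ c.re := by
    rw [← Complex.ofReal_natCast,
      Complex.norm_cpow_eq_rpow_re_of_pos hnpos]
  rw [hca, hcb, hcc, ← Real.rpow_add hnpos, ← Real.rpow_sub hnpos]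
  have hexp : a.re + b.re - c.re = -(c-a-b).re := by simp [Complex.sub_re]; ring
  rw [hexp, mul_comm (L+1)]
  exact mul_le_mul_of_nonneg_left hn (Real.rpow_nonneg hnpos.le _)

lemma T_zero_of_int {a : ℂ} (b c : ℂ) {m : ℕ} (hm : a = -(m:ℂ)) {n : ℕ} (hn : m < n) :
    T a b c n = 0 := by
  have : P a n = 0 := by
    rw [P_eq_prod]
    exact Finset.prod_eq_zero (Finset.mem_range.2 hn) (by rw [hm]; ring)
  simp [T, this]

lemma main_asym (a b c : ℂ) (hc : ∀ j : ℕ, c ≠ -(j:ℂ)) (h : 0 < (c - a - b).re) :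
    Summable (T a b c) ∧ Tendsto (fun n : ℕ => (n:ℂ) * T a b c n) atTop (𝓝 0) := by
  by_cases hdeg : (∃ m : ℕ, a = -(m:ℂ)) ∨ (∃ m : ℕ, b = -(m:ℂ))
  · -- terminating series
    obtain ⟨m, hm⟩ : ∃ m : ℕ, ∀ n, m < n → T a b c n = 0 := by
      rcases hdeg with ⟨m, hm⟩ | ⟨m, hm⟩
      · exact ⟨m, fun n hn => T_zero_of_int b c hm hn⟩
      · refine ⟨m, fun n hn => ?_⟩
        have : P b n = 0 := by
          rw [P_eq_prod]
          exact Finset.prod_eq_zero (Finset.mem_range.2 hn) (by rw [hm]; ring)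
        simp [T, this]
    constructor
    · apply summable_of_ne_finset_zero (s := Finset.range (m+1))
      intro n hn
      exact hm n (by simpa using hn)
    · apply Tendsto.congr' _ tendsto_const_nhds
      filter_upwards [eventually_gt_atTop m] with n hn
      rw [hm n hn, mul_zero]
  · push_neg at hdeg
    obtain ⟨ha, hb⟩ := hdeg
    obtain ⟨C, hC0, hCb⟩ := norm_nT_bound a b c ha hb hc
    constructor
    · have hsum : Summable (fun n : ℕ => T a b c (n+1)) := by
        apply Summable.of_norm_bounded_eventually_nat
          (g := fun n => C * (n:ℝ) ^ (-(c-a-b).re - 1))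
        · exact (Real.summable_nat_rpow.2 (by linarith)).mul_left C
        · filter_upwards [hCb, eventually_ge_atTop 1] with n hn hn1
          have hnpos : (0:ℝ) < (n:ℝ) := by exact_mod_cast hn1
          have h1 : ‖T a b c (n+1)‖ = ‖((n:ℂ)+1) * T a b c (n+1)‖ / ((n:ℝ)+1) := by
            rw [norm_mul]
            have : ‖(n:ℂ)+1‖ = (n:ℝ)+1 := by
              rw [show ((n:ℂ)+1) = (((n:ℝ)+1 : ℝ) : ℂ) by push_cast; ring,
                Complex.norm_real, Real.norm_of_nonneg (by positivity)]
            rw [this, mul_div_cancel_left₀ _ (by positivity : (0:ℝ) < (n:ℝ)+1).ne']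
          rw [h1]
          calc ‖((n:ℂ)+1) * T a b c (n+1)‖ / ((n:ℝ)+1)
              ≤ C * (n:ℝ) ^ (-(c-a-b).re) / (n:ℝ) := by
                exact div_le_div₀ (by positivity) hn (by positivity)
                  (by push_cast; linarith)
            _ = C * (n:ℝ) ^ (-(c-a-b).re - 1) := by
                rw [Real.rpow_sub hnpos, Real.rpow_one, mul_div_assoc]
      exact (summable_nat_add_iff 1).1 hsum
    · have key : Tendsto (fun n : ℕ => ((n:ℂ)+1) * T a b c (n+1)) atTop (𝓝 0) := by
        apply squeeze_zero_norm' hCb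
        rw [show (0:ℝ) = C * 0 by ring]
        apply Tendsto.const_mul
        exact (tendsto_rpow_neg_atTop h).comp tendsto_natCast_atTop_atTop
      have : Tendsto (fun n : ℕ => ((n+1:ℕ):ℂ) * T a b c (n+1)) atTop (𝓝 0) := by
        apply key.congr
        intro n; push_cast; ring
      exact (tendsto_add_atTop_iff_nat 1).1 this

lemma per_term (a b x : ℂ) (hx : ∀ j : ℕ, x ≠ -(j:ℂ)) (n : ℕ) :
    x*(x-a-b) * T a b x n - (x-a)*(x-b) * T a b (x+1) n
      = x*(n:ℂ)*T a b x n - x*((n:ℂ)+1)*T a b x (n+1) := by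
  have hX := P_ne_zero hx n
  have hX1 := P_ne_zero hx (n+1)
  have hx0 : x ≠ 0 := by simpa using hx 0
  have hxn : x + (n:ℂ) ≠ 0 := fun hcon => hx n (eq_neg_of_add_eq_zero_left hcon)
  have hf : ((n.factorial:ℂ)) ≠ 0 := Nat.cast_ne_zero.2 n.factorial_ne_zero
  have hn1 : ((n:ℂ)+1) ≠ 0 := by
    have : (((n+1:ℕ)):ℂ) ≠ 0 := Nat.cast_ne_zero.2 (Nat.succ_ne_zero n)
    push_cast at this; exact this
  have e3 : P (x+1) n = P x n * (x + n) / x := by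
    rw [eq_div_iff hx0]; linear_combination (P_succ x n) - (P_succ' x n)
  simp only [T]
  rw [P_succ a n, P_succ b n, P_succ x n, e3, Nat.factorial_succ]
  push_cast
  field_simp
  ring

lemma step_rec (a b x : ℂ) (hx : ∀ j : ℕ, x ≠ -(j:ℂ)) (h : 0 < (x - a - b).re) :
    x*(x-a-b) * (∑' n, T a b x n) = (x-a)*(x-b) * (∑' n, T a b (x+1) n) := by
  obtain ⟨hs1, ht1⟩ := main_asym a b x hx h
  have hx1 : ∀ j : ℕ, x + 1 ≠ -(j:ℂ) := by
    intro j hj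
    exact hx (j+1) (by push_cast; linear_combination hj)
  have h2 : 0 < (x + 1 - a - b).re := by
    have : (x + 1 - a - b).re = (x-a-b).re + 1 := by simp [Complex.sub_re, Complex.add_re]; ring
    rw [this]; linarith
  obtain ⟨hs2, _⟩ := main_asym a b (x+1) hx1 h2
  set u : ℕ → ℂ := fun n => x * (n:ℂ) * T a b x n with hu
  have hdf : (fun n : ℕ => x*(x-a-b) * T a b x n - (x-a)*(x-b) * T a b (x+1) n)
      = fun n => u n - u (n+1) := by
    funext n
    rw [per_term a b x hx n, hu]
    push_cast; ring
  have hsum : Summable (fun n : ℕ => x*(x-a-b) * T a b x n - (x-a)*(x-b) * T a b (x+1) n) :=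
    (hs1.mul_left _).sub (hs2.mul_left _)
  have hsum' : Summable (fun n : ℕ => u n - u (n+1)) := hdf ▸ hsum
  have hu0 : u 0 = 0 := by simp [hu]
  have hulim : Tendsto u atTop (𝓝 0) := by
    have := ht1.const_mul x
    simpa [hu, mul_assoc, mul_zero] using this
  have htel : Tendsto (fun N => ∑ n ∈ Finset.range N, (u n - u (n+1))) atTop (𝓝 0) := by
    have : ∀ N, ∑ n ∈ Finset.range N, (u n - u (n+1)) = u 0 - u N :=
      fun N => Finset.sum_range_sub' u N
    rw [show (0:ℂ) = u 0 - 0 by rw [hu0, sub_zero]]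
    exact (funext this : _) ▸ (tendsto_const_nhds.sub hulim)
  have hts : ∑' n, (u n - u (n+1)) = 0 :=
    tendsto_nhds_unique hsum'.hasSum.tendsto_sum_nat htel
  have : ∑' n, (x*(x-a-b) * T a b x n - (x-a)*(x-b) * T a b (x+1) n) = 0 := by
    rw [hdf]; exact hts
  rw [Summable.tsum_sub (hs1.mul_left _) (hs2.mul_left _), tsum_mul_left, tsum_mul_left] at this
  linear_combination this

noncomputable def F (a b x : ℂ) : ℂ := ∑' n : ℕ, T a b x n
noncomputable def G (a b x : ℂ) : ℂ :=
  Complex.Gamma x * Complex.Gamma (x - a - b) / (Complex.Gamma (x - a) * Complex.Gamma (x - b))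
noncomputable def R (a b x : ℂ) : ℂ := (x-a)*(x-b) / (x*(x-a-b))

lemma re_pos_ne_neg_nat {z : ℂ} (h : 0 < z.re) : ∀ j : ℕ, z ≠ -(j:ℂ) := by
  intro j hj
  rw [hj, Complex.neg_re, Complex.natCast_re] at h
  have : (0:ℝ) ≤ j := Nat.cast_nonneg j
  linarith

lemma F_rec (a b x : ℂ) (hx : ∀ j : ℕ, x ≠ -(j:ℂ)) (h : 0 < (x - a - b).re) :
    F a b x = R a b x * F a b (x+1) := by
  have hx0 : x ≠ 0 := by simpa using hx 0
  have hd : x - a - b ≠ 0 := by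
    intro h0; rw [h0] at h; simp at h
  have := step_rec a b x hx h
  rw [F, F, R]
  field_simp
  linear_combination this

lemma G_rec (a b x : ℂ) (hx0 : x ≠ 0) (hd : x - a - b ≠ 0) :
    G a b x = R a b x * G a b (x+1) := by
  by_cases hA : Complex.Gamma (x - a) = 0
  · obtain ⟨m, hm⟩ := (Complex.Gamma_eq_zero_iff _).1 hA
    match m, hm with
    | 0, hm =>
      simp only [Nat.cast_zero, neg_zero] at hm
      have hxa : x - a = 0 := hm
      rw [G, G, R, hxa]
      simp [Complex.Gamma_zero, hA]
    | (m+1), hm =>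
      have h1 : x + 1 - a = -(m:ℂ) := by push_cast at hm ⊢; linear_combination hm
      have : Complex.Gamma (x + 1 - a) = 0 := by
        rw [h1]; exact (Complex.Gamma_eq_zero_iff _).2 ⟨m, rfl⟩
      rw [G, G, this, hA]
      simp
  · by_cases hB : Complex.Gamma (x - b) = 0
    · obtain ⟨m, hm⟩ := (Complex.Gamma_eq_zero_iff _).1 hB
      match m, hm with
      | 0, hm =>
        simp only [Nat.cast_zero, neg_zero] at hm
        rw [G, G, R, hm]
        simp [Complex.Gamma_zero, hB]
      | (m+1), hm =>
        have h1 : x + 1 - b = -(m:ℂ) := by push_cast at hm ⊢; linear_combination hm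
        have : Complex.Gamma (x + 1 - b) = 0 := by
          rw [h1]; exact (Complex.Gamma_eq_zero_iff _).2 ⟨m, rfl⟩
        rw [G, G, this, hB]
        simp
    · have hxa : x - a ≠ 0 := fun h0 => hA (by rw [h0]; exact Complex.Gamma_zero)
      have hxb : x - b ≠ 0 := fun h0 => hB (by rw [h0]; exact Complex.Gamma_zero)
      rw [G, G, R,
        show x + 1 = x + 1 from rfl,
        show x + 1 - a - b = (x - a - b) + 1 by ring,
        show x + 1 - a = (x - a) + 1 by ring,
        show x + 1 - b = (x - b) + 1 by ring,
        Complex.Gamma_add_one x hx0, Complex.Gamma_add_one _ hd,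
        Complex.Gamma_add_one _ hxa, Complex.Gamma_add_one _ hxb]
      field_simp

lemma shift_ne (c : ℂ) (hc : ∀ j : ℕ, c ≠ -(j:ℂ)) (k : ℕ) :
    ∀ j : ℕ, c + (k:ℂ) ≠ -(j:ℂ) := by
  intro j hj
  exact hc (j + k) (by push_cast; linear_combination hj)

lemma shift_re (a b c : ℂ) (h : 0 < (c - a - b).re) (k : ℕ) :
    0 < (c + (k:ℂ) - a - b).re := by
  have : (c + (k:ℂ) - a - b).re = (c - a - b).re + k := by
    simp [Complex.sub_re, Complex.add_re, Complex.natCast_re]; ring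
  rw [this]; positivity

lemma iter_F (a b c : ℂ) (hc : ∀ j : ℕ, c ≠ -(j:ℂ)) (h : 0 < (c - a - b).re) (k : ℕ) :
    F a b c = (∏ j ∈ Finset.range k, R a b (c + j)) * F a b (c + k) := by
  induction k with
  | zero => simp
  | succ k ih =>
    have hcast : c + ((k+1 : ℕ):ℂ) = (c + k) + 1 := by push_cast; ring
    rw [ih, Finset.prod_range_succ, mul_assoc, hcast, ← F_rec a b (c + k) (shift_ne c hc k)
      (shift_re a b c h k)]

lemma iter_G (a b c : ℂ) (hc : ∀ j : ℕ, c ≠ -(j:ℂ)) (h : 0 < (c - a - b).re) (k : ℕ) :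
    G a b c = (∏ j ∈ Finset.range k, R a b (c + j)) * G a b (c + k) := by
  induction k with
  | zero => simp
  | succ k ih =>
    have hx0 : c + (k:ℂ) ≠ 0 := by simpa using shift_ne c hc k 0
    have hd : c + (k:ℂ) - a - b ≠ 0 := by
      intro h0
      have := shift_re a b c h k
      rw [h0] at this; simp at this
    have hcast : c + ((k+1 : ℕ):ℂ) = (c + k) + 1 := by push_cast; ring
    rw [ih, Finset.prod_range_succ, mul_assoc, hcast, ← G_rec a b (c + k) hx0 hd]

lemma inv_nat_tendsto : Tendsto (fun k : ℕ => ((k:ℂ))⁻¹) atTop (𝓝 0) := by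
  have h1 : Tendsto (fun k : ℕ => (((k:ℝ)⁻¹ : ℝ) : ℂ)) atTop (𝓝 ((0:ℝ):ℂ)) :=
    (Complex.continuous_ofReal.tendsto 0).comp tendsto_inv_atTop_nhds_zero_nat
  simpa using h1

lemma aux_div_tendsto (w : ℂ) :
    Tendsto (fun k : ℕ => (k:ℂ) / ((k:ℂ) + w)) atTop (𝓝 1) := by
  have key : Tendsto (fun k : ℕ => (1 + w * ((k:ℂ))⁻¹)⁻¹) atTop (𝓝 1) := by
    have h1 : Tendsto (fun k : ℕ => 1 + w * ((k:ℂ))⁻¹) atTop (𝓝 1) := by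
      have := (inv_nat_tendsto.const_mul w).const_add 1
      simpa using this
    simpa using h1.inv₀ one_ne_zero
  apply key.congr'
  filter_upwards [eventually_ge_atTop 1] with k hk
  have hk0 : (k:ℂ) ≠ 0 := Nat.cast_ne_zero.2 (by omega)
  have : (1 + w * ((k:ℂ))⁻¹) = ((k:ℂ) + w) * ((k:ℂ))⁻¹ := by
    field_simp
  rw [this, mul_inv, inv_inv, div_eq_mul_inv, mul_comm]

lemma Gamma_add_nat {z : ℂ} (hz : ∀ j : ℕ, z ≠ -(j:ℂ)) (k : ℕ) :
    Complex.Gamma (z + k) = P z k * Complex.Gamma z := by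
  induction k with
  | zero => simp [P_zero]
  | succ k ih =>
    have hzk : z + k ≠ 0 := by simpa using shift_ne z hz k 0
    have : z + ((k+1:ℕ):ℂ) = (z + k) + 1 := by push_cast; ring
    rw [this, Complex.Gamma_add_one _ hzk, ih, P_succ]
    ring

lemma fact_prod_nat (K m : ℕ) :
    (((K+m).factorial : ℂ)) = (K.factorial : ℂ) * ∏ j ∈ Finset.range m, ((K:ℂ) + 1 + j) := by
  induction m with
  | zero => simp
  | succ m ih =>
    rw [show K + (m+1) = (K + m) + 1 from rfl, Nat.factorial_succ, Finset.prod_range_succ]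
    push_cast
    rw [ih]
    push_cast
    ring

lemma f_tendsto (z : ℂ) :
    Tendsto (fun k : ℕ => Complex.Gamma (z + k) / (Complex.Gamma (k:ℂ) * (k:ℂ) ^ z))
      atTop (𝓝 1) := by
  by_cases hz : ∀ j : ℕ, z ≠ -(j:ℂ)
  · -- non-degenerate case
    have hG : Complex.Gamma z ≠ 0 := Complex.Gamma_ne_zero hz
    have key : Tendsto (fun k : ℕ =>
        Complex.Gamma z * ((k:ℂ) / ((k:ℂ) + z)) * (Complex.GammaSeq z k)⁻¹) atTop
        (𝓝 (Complex.Gamma z * 1 * (Complex.Gamma z)⁻¹)) :=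
      ((tendsto_const_nhds.mul (aux_div_tendsto z)).mul
        ((Complex.GammaSeq_tendsto_Gamma z).inv₀ hG))
    rw [mul_one, mul_inv_cancel₀ hG] at key
    apply key.congr'
    filter_upwards [eventually_ge_atTop 1] with k hk
    have hk0 : k ≠ 0 := by omega
    have hkc : (k:ℂ) ≠ 0 := Nat.cast_ne_zero.2 hk0
    have hzk : z + (k:ℂ) ≠ 0 := by simpa using shift_ne z hz k 0
    have hkz : (k:ℂ) + z ≠ 0 := by rwa [add_comm]
    have hpz := P_ne_zero hz k
    have hpz1 := P_ne_zero hz (k+1)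
    have hkpow : (k:ℂ) ^ z ≠ 0 := by simp [Complex.cpow_eq_zero_iff, hkc]
    have hfac : ((k.factorial : ℂ)) ≠ 0 := Nat.cast_ne_zero.2 k.factorial_ne_zero
    have hGk : Complex.Gamma (k:ℂ) = (((k-1).factorial : ℂ)) := by
      rw [show ((k:ℕ):ℂ) = ((k-1:ℕ):ℂ) + 1 by push_cast [Nat.cast_sub (by omega : 1 ≤ k)]; ring]
      exact_mod_cast Complex.Gamma_nat_eq_factorial (k-1)
    have hfacs : ((k.factorial : ℂ)) = (k:ℂ) * (((k-1).factorial : ℂ)) := by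
      rw [show k = (k-1) + 1 by omega, Nat.factorial_succ]
      push_cast [Nat.cast_sub (by omega : 1 ≤ k)]
      ring
    have hGSne : Complex.GammaSeq z k ≠ 0 := GammaSeq_ne_zero hz hk0
    have hGm1 : (((k-1).factorial : ℂ)) ≠ 0 := Nat.cast_ne_zero.2 (k-1).factorial_ne_zero
    rw [Gamma_add_nat hz k, hGk, GammaSeq_eq, P_succ]
    field_simp
    rw [hfacs]
    ring
  · -- z = -m
    push_neg at hz
    obtain ⟨m, hm⟩ := hz
    have key : Tendsto (fun k : ℕ => ∏ j ∈ Finset.range m, ((k:ℂ) / ((k:ℂ) + ((j:ℂ) - m))))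
        atTop (𝓝 1) := by
      have := tendsto_finset_prod (Finset.range m)
        (fun j _ => aux_div_tendsto ((j:ℂ) - m))
      simpa using this
    apply key.congr'
    filter_upwards [eventually_ge_atTop (m+1)] with k hk
    obtain ⟨K, rfl⟩ : ∃ K, k = K + m + 1 := ⟨k - m - 1, by omega⟩
    have hkc : ((K+m+1:ℕ):ℂ) ≠ 0 := Nat.cast_ne_zero.2 (by omega)
    have h1 : z + ((K+m+1:ℕ):ℂ) = ((K+1:ℕ):ℂ) := by rw [hm]; push_cast; ring
    have h2 : Complex.Gamma ((K+1:ℕ):ℂ) = (K.factorial : ℂ) := by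
      exact_mod_cast Complex.Gamma_nat_eq_factorial K
    have h3 : Complex.Gamma ((K+m+1:ℕ):ℂ) = (((K+m).factorial : ℂ)) := by
      exact_mod_cast Complex.Gamma_nat_eq_factorial (K+m)
    have h4 : ((K+m+1:ℕ):ℂ) ^ z = (((K+m+1:ℕ):ℂ) ^ (m:ℕ))⁻¹ := by
      rw [hm, show -((m:ℕ):ℂ) = -((m:ℕ):ℂ) from rfl, Complex.cpow_neg, Complex.cpow_natCast]
    rw [h1, h2, h3, h4, fact_prod_nat K m]
    have hKfac : (K.factorial : ℂ) ≠ 0 := Nat.cast_ne_zero.2 K.factorial_ne_zero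
    have hprodne : ∀ j ∈ Finset.range m, ((K:ℂ) + 1 + (j:ℂ)) ≠ 0 := by
      intro j hj
      have : (((K+1+j:ℕ)):ℂ) ≠ 0 := Nat.cast_ne_zero.2 (by omega)
      push_cast at this
      convert this using 2 <;> push_cast <;> ring
    rw [Finset.prod_div_distrib, Finset.prod_const, Finset.card_range]
    have hpne : (∏ j ∈ Finset.range m, ((K:ℂ) + 1 + (j:ℂ))) ≠ 0 :=
      Finset.prod_ne_zero_iff.2 hprodne
    have hprodeq : (∏ j ∈ Finset.range m, (((K+m+1:ℕ):ℂ) + ((j:ℂ) - m)))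
        = ∏ j ∈ Finset.range m, ((K:ℂ) + 1 + (j:ℂ)) :=
      Finset.prod_congr rfl fun j _ => by push_cast; ring
    rw [hprodeq]
    have hkpm : (((K+m+1:ℕ):ℂ))^(m:ℕ) ≠ 0 := pow_ne_zero _ hkc
    field_simp

lemma G_shift_tendsto (a b c : ℂ) (hc : ∀ j : ℕ, c ≠ -(j:ℂ)) (h : 0 < (c - a - b).re) :
    Tendsto (fun k : ℕ => G a b (c + k)) atTop (𝓝 1) := by
  have key : Tendsto (fun k : ℕ =>
      (Complex.Gamma (c + k) / (Complex.Gamma (k:ℂ) * (k:ℂ) ^ c)) *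
        (Complex.Gamma ((c-a-b) + k) / (Complex.Gamma (k:ℂ) * (k:ℂ) ^ (c-a-b))) /
      ((Complex.Gamma ((c-a) + k) / (Complex.Gamma (k:ℂ) * (k:ℂ) ^ (c-a))) *
        (Complex.Gamma ((c-b) + k) / (Complex.Gamma (k:ℂ) * (k:ℂ) ^ (c-b)))))
      atTop (𝓝 (1 * 1 / (1 * 1))) :=
    ((f_tendsto c).mul (f_tendsto (c-a-b))).div
      ((f_tendsto (c-a)).mul (f_tendsto (c-b))) (by norm_num)
  norm_num at key
  apply key.congr'
  filter_upwards [eventually_ge_atTop (⌈|(c-a).re|⌉₊ + ⌈|(c-b).re|⌉₊ + 1)] with k hk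
  have hk1 : 1 ≤ k := by omega
  have hka : (⌈|(c-a).re|⌉₊ : ℝ) + 1 ≤ (k:ℝ) := by
    have : ⌈|(c-a).re|⌉₊ + 1 ≤ k := le_trans (by omega) hk
    have h2 : ((⌈|(c-a).re|⌉₊ + 1 : ℕ):ℝ) ≤ (k:ℝ) := by exact_mod_cast this
    push_cast at h2; linarith
  have hkb : (⌈|(c-b).re|⌉₊ : ℝ) + 1 ≤ (k:ℝ) := by
    have : ⌈|(c-b).re|⌉₊ + 1 ≤ k := le_trans (by omega) hk
    have h2 : ((⌈|(c-b).re|⌉₊ + 1 : ℕ):ℝ) ≤ (k:ℝ) := by exact_mod_cast this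
    push_cast at h2; linarith
  have hrea : 0 < ((c-a) + k).re := by
    rw [Complex.add_re, Complex.natCast_re]
    have h1 := Nat.le_ceil |(c-a).re|
    have h2 := neg_abs_le (c-a).re
    linarith
  have hreb : 0 < ((c-b) + k).re := by
    rw [Complex.add_re, Complex.natCast_re]
    have h1 := Nat.le_ceil |(c-b).re|
    have h2 := neg_abs_le (c-b).re
    linarith
  have hred : 0 < ((c-a-b) + k).re := by
    rw [Complex.add_re, Complex.natCast_re]
    have : (0:ℝ) ≤ k := Nat.cast_nonneg k
    linarith
  have hkc : (k:ℂ) ≠ 0 := Nat.cast_ne_zero.2 (by omega)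
  have hGk : Complex.Gamma (k:ℂ) ≠ 0 := by
    refine Complex.Gamma_ne_zero fun m hm => ?_
    have : (k:ℝ) = -(m:ℝ) := by exact_mod_cast congrArg Complex.re hm
    have h1 : (0:ℝ) ≤ (m:ℝ) := Nat.cast_nonneg m
    have h2 : (1:ℝ) ≤ (k:ℝ) := by exact_mod_cast hk1
    linarith
  have hGc : Complex.Gamma (c + k) ≠ 0 := Complex.Gamma_ne_zero (shift_ne c hc k)
  have hGd : Complex.Gamma ((c-a-b) + k) ≠ 0 := Complex.Gamma_ne_zero (re_pos_ne_neg_nat hred)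
  have hGa : Complex.Gamma ((c-a) + k) ≠ 0 := Complex.Gamma_ne_zero (re_pos_ne_neg_nat hrea)
  have hGb : Complex.Gamma ((c-b) + k) ≠ 0 := Complex.Gamma_ne_zero (re_pos_ne_neg_nat hreb)
  have hp1 : (k:ℂ) ^ c ≠ 0 := by simp [Complex.cpow_eq_zero_iff, hkc]
  have hp2 : (k:ℂ) ^ (c-a-b) ≠ 0 := by simp [Complex.cpow_eq_zero_iff, hkc]
  have hp3 : (k:ℂ) ^ (c-a) ≠ 0 := by simp [Complex.cpow_eq_zero_iff, hkc]
  have hp4 : (k:ℂ) ^ (c-b) ≠ 0 := by simp [Complex.cpow_eq_zero_iff, hkc]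
  have hpow : (k:ℂ) ^ (c-a) * (k:ℂ) ^ (c-b) = (k:ℂ) ^ c * (k:ℂ) ^ (c-a-b) := by
    rw [← Complex.cpow_add _ _ hkc, ← Complex.cpow_add _ _ hkc,
      show (c-a) + (c-b) = c + (c-a-b) by ring]
  rw [G, show c + (k:ℂ) - a - b = (c-a-b) + k by ring, show c + (k:ℂ) - a = (c-a) + k by ring,
    show c + (k:ℂ) - b = (c-b) + k by ring]
  field_simp
  linear_combination hpow

lemma fact_eq_prod (n : ℕ) : ((n.factorial : ℝ)) = ∏ j ∈ Finset.range n, (1 + (j:ℝ)) := by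
  induction n with
  | zero => simp
  | succ n ih =>
    rw [Nat.factorial_succ, Finset.prod_range_succ, ← ih]
    push_cast; ring

lemma T_norm_le (a b c : ℂ) {M : ℝ} (hMa : ‖a‖ ≤ M) (hMb : ‖b‖ ≤ M)
    {s : ℝ} (hs : ‖c‖ ≤ s) {k : ℕ} (hk : s + 1 ≤ (k:ℝ)) (n : ℕ) :
    ‖T a b (c + k) n‖ ≤ ∏ j ∈ Finset.range n, ((M + j)^2 / ((((k:ℝ) - s) + j) * (1 + j))) := by
  have hM0 : 0 ≤ M := le_trans (norm_nonneg a) hMa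
  have hs0 : 0 ≤ s := le_trans (norm_nonneg c) hs
  have hks : 1 ≤ (k:ℝ) - s := by linarith
  rw [T, norm_div, norm_mul, norm_mul, P_eq_prod, P_eq_prod, P_eq_prod, norm_prod, norm_prod,
    norm_prod]
  have hnum : (∏ j ∈ Finset.range n, ‖a + (j:ℂ)‖) * ∏ j ∈ Finset.range n, ‖b + (j:ℂ)‖
      ≤ ∏ j ∈ Finset.range n, (M + j)^2 := by
    have h1 : ∀ (z : ℂ), ‖z‖ ≤ M → (∏ j ∈ Finset.range n, ‖z + (j:ℂ)‖)
        ≤ ∏ j ∈ Finset.range n, (M + j) := by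
      intro z hz
      apply Finset.prod_le_prod (fun j _ => norm_nonneg _)
      intro j _
      calc ‖z + (j:ℂ)‖ ≤ ‖z‖ + ‖((j:ℕ):ℂ)‖ := norm_add_le _ _
        _ ≤ M + j := by rw [Complex.norm_natCast]; linarith
    calc (∏ j ∈ Finset.range n, ‖a + (j:ℂ)‖) * ∏ j ∈ Finset.range n, ‖b + (j:ℂ)‖
        ≤ (∏ j ∈ Finset.range n, (M + j)) * ∏ j ∈ Finset.range n, (M + j) :=
          mul_le_mul (h1 a hMa) (h1 b hMb) (Finset.prod_nonneg fun j _ => norm_nonneg _)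
            (Finset.prod_nonneg fun j _ => by positivity)
      _ = ∏ j ∈ Finset.range n, (M + j)^2 := by rw [← Finset.prod_mul_distrib]; congr 1; ext j; ring
  have hden : (∏ j ∈ Finset.range n, (((k:ℝ) - s) + j)) * (n.factorial : ℝ)
      ≤ (∏ j ∈ Finset.range n, ‖c + (k:ℂ) + (j:ℂ)‖) * ‖((n.factorial : ℕ):ℂ)‖ := by
    rw [Complex.norm_natCast]
    apply mul_le_mul_of_nonneg_right _ (Nat.cast_nonneg _)
    apply Finset.prod_le_prod (fun j _ => by positivity)
    intro j _
    have h3 := norm_sub_norm_le (((k:ℕ):ℂ) + ((j:ℕ):ℂ)) (c + (k:ℂ) + (j:ℂ))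
    have h5 : ((k:ℂ)) + ((j:ℂ)) - (c + (k:ℂ) + (j:ℂ)) = -c := by ring
    rw [h5, norm_neg] at h3
    have h4 : ‖(((k:ℕ):ℂ) + ((j:ℕ):ℂ))‖ = (k:ℝ) + j := by
      rw [show (((k:ℕ):ℂ) + ((j:ℕ):ℂ)) = (((k+j:ℕ)):ℂ) by push_cast; ring,
        Complex.norm_natCast]
      push_cast; ring
    rw [h4] at h3
    linarith
  have hdenpos : 0 < (∏ j ∈ Finset.range n, (((k:ℝ) - s) + j)) * (n.factorial : ℝ) := by
    apply mul_pos (Finset.prod_pos fun j _ => by positivity)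
    exact_mod_cast Nat.factorial_pos n
  rw [show (∏ j ∈ Finset.range n, ((M + j)^2 / ((((k:ℝ) - s) + j) * (1 + j))))
      = (∏ j ∈ Finset.range n, (M + j)^2) /
        ((∏ j ∈ Finset.range n, (((k:ℝ) - s) + j)) * (n.factorial : ℝ)) by
    rw [Finset.prod_div_distrib, Finset.prod_mul_distrib, fact_eq_prod]]
  exact div_le_div₀ (Finset.prod_nonneg fun j _ => by positivity) hnum hdenpos hden

lemma prod_ratio_le {M : ℝ} (hM0 : 0 ≤ M) {x y : ℝ} (hy : 1 ≤ y) (hxy : y ≤ x) (n : ℕ) :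
    ∏ j ∈ Finset.range (n+1), ((M + j)^2 / ((x + j) * (1 + j)))
      ≤ (y / x) * ∏ j ∈ Finset.range (n+1), ((M + j)^2 / ((y + j) * (1 + j))) := by
  have hx : 1 ≤ x := le_trans hy hxy
  induction n with
  | zero =>
    apply le_of_eq
    rw [Finset.prod_range_one, Finset.prod_range_one]
    push_cast
    have hx0 : x ≠ 0 := by linarith
    have hy0 : y ≠ 0 := by linarith
    field_simp
    ring
  | succ n ih =>
    rw [Finset.prod_range_succ (fun j : ℕ => (M + (j:ℝ))^2 / ((x + j) * (1 + j))) (n+1),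
      Finset.prod_range_succ (fun j : ℕ => (M + (j:ℝ))^2 / ((y + j) * (1 + j))) (n+1),
      ← mul_assoc]
    apply mul_le_mul ih ?_ (by positivity) ?_
    · apply div_le_div_of_nonneg_left (by positivity) (by positivity)
      have : (0:ℝ) ≤ ((n+1:ℕ):ℝ) := Nat.cast_nonneg _
      nlinarith
    · apply mul_nonneg (by positivity)
      exact Finset.prod_nonneg fun j _ => by positivity

lemma QQ_tele {M K : ℝ} (hM : 0 ≤ M) (hK : (M+1)^2 + 2 ≤ K) (n : ℕ) :
    ∏ j ∈ Finset.range n, ((M + j)^2 / ((K + j) * (1 + j)))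
      ≤ (K-2)*(K-1) / ((K + n - 2) * (K + n - 1)) := by
  have hK3 : 3 ≤ K := by nlinarith
  induction n with
  | zero =>
    simp only [Finset.range_zero, Finset.prod_empty, Nat.cast_zero, add_zero]
    have hne : (K-2)*(K-1) ≠ 0 := ne_of_gt (by nlinarith)
    exact le_of_eq (div_self hne).symm
  | succ n ih =>
    have hn0 : (0:ℝ) ≤ n := Nat.cast_nonneg n
    rw [Finset.prod_range_succ]
    calc (∏ j ∈ Finset.range n, ((M + j)^2 / ((K + j) * (1 + j)))) *
          ((M + n)^2 / ((K + n) * (1 + n)))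
        ≤ ((K-2)*(K-1) / ((K + n - 2) * (K + n - 1))) * ((K + n - 2) / (K + n)) := by
          apply mul_le_mul ih ?_ (by positivity) (by
            apply div_nonneg <;> nlinarith)
          rw [div_le_div_iff₀ (by positivity) (by positivity)]
          have hKn : (0:ℝ) < K + n := by linarith
          have hfact : 0 ≤ (K - 2 - (M+1)^2) * (1 + (n:ℝ)) :=
            mul_nonneg (by nlinarith) (by linarith)
          have hcore : (M+(n:ℝ))^2 ≤ (K+(n:ℝ)-2)*(1+n) := by
            nlinarith [hfact, mul_nonneg hn0 (sq_nonneg M), hn0, hM, mul_nonneg hn0 hM]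
          nlinarith [mul_le_mul_of_nonneg_right hcore hKn.le]
      _ = (K-2)*(K-1) / ((K + (n+1:ℕ) - 2) * (K + (n+1:ℕ) - 1)) := by
          have h1 : K + (n:ℝ) - 2 ≠ 0 := by nlinarith
          push_cast
          rw [div_mul_div_comm,
            show (K + (n:ℝ) - 2) * (K + n - 1) * (K + n) = (K+(n:ℝ)-2) * ((K+n-1)*(K+n)) by ring,
            show (K-2)*(K-1) * (K+(n:ℝ)-2) = (K+(n:ℝ)-2) * ((K-2)*(K-1)) by ring,
            mul_div_mul_left _ _ h1]
          congr 1
          ring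

set_option maxHeartbeats 2000000 in
lemma F_shift_tendsto (a b c : ℂ) (hc : ∀ j : ℕ, c ≠ -(j:ℂ)) (h : 0 < (c - a - b).re) :
    Tendsto (fun k : ℕ => F a b (c + k)) atTop (𝓝 1) := by
  set M : ℝ := max 1 (max ‖a‖ ‖b‖) with hMdef
  have hM1 : 1 ≤ M := le_max_left _ _
  have hM0 : 0 ≤ M := by linarith
  have hMa : ‖a‖ ≤ M := le_trans (le_max_left _ _) (le_max_right _ _)
  have hMb : ‖b‖ ≤ M := le_trans (le_max_right _ _) (le_max_right _ _)
  set s : ℝ := ‖c‖ with hsdef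
  have hs0 : 0 ≤ s := norm_nonneg c
  set K : ℝ := (M+1)^2 + 2 with hKdef
  have hK3 : 3 ≤ K := by nlinarith
  set QQ : ℕ → ℝ := fun n => ∏ j ∈ Finset.range n, ((M + (j:ℝ))^2 / ((K + j) * (1 + j)))
    with hQQdef
  have hQQnn : ∀ n, 0 ≤ QQ n := fun n => Finset.prod_nonneg fun j _ => by positivity
  have hmaj : Summable (fun n : ℕ => K^2 * (1 / (((n:ℝ)+1))^2)) := by
    have h0 : Summable (fun n : ℕ => 1 / ((n:ℝ))^2) :=
      Real.summable_one_div_nat_pow.2 (by norm_num)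
    have h1 : Summable (fun n : ℕ => 1 / ((((n+1:ℕ)):ℝ))^2) := (summable_nat_add_iff 1).2 h0
    have h2 := h1.mul_left (K^2)
    apply h2.congr
    intro n
    push_cast
    ring
  have hQQsum : Summable QQ := by
    apply Summable.of_nonneg_of_le hQQnn (fun n => ?_) hmaj
    refine le_trans (QQ_tele hM0 (le_refl K) n) ?_
    have hn0 : (0:ℝ) ≤ n := Nat.cast_nonneg n
    have e1 : (K:ℝ)^2 * (1 / ((n:ℝ)+1)^2) = K^2 / (((n:ℝ)+1)*((n:ℝ)+1)) := by
      field_simp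
    rw [e1]
    apply div_le_div₀ (by positivity) (by nlinarith) (by positivity) (by nlinarith)
  have hQQsum1 : Summable (fun n : ℕ => QQ (n+1)) := (summable_nat_add_iff 1).2 hQQsum
  set S : ℝ := ∑' n : ℕ, QQ (n+1) with hSdef
  have hS0 : 0 ≤ S := tsum_nonneg fun n => hQQnn _
  have hbound : ∀ᶠ k : ℕ in atTop, ‖F a b (c + k) - 1‖ ≤ (K * S) / ((k:ℝ) - s) := by
    filter_upwards [eventually_ge_atTop ⌈s + K⌉₊] with k hk
    have hks : s + K ≤ (k:ℝ) := le_trans (Nat.le_ceil _) (Nat.cast_le.2 hk)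
    have hks1 : s + 1 ≤ (k:ℝ) := by linarith
    have hKks : K ≤ (k:ℝ) - s := by linarith
    have hsum := (main_asym a b (c + k) (shift_ne c hc k) (shift_re a b c h k)).1
    have hT0 : T a b (c + k) 0 = 1 := by simp [T, P_zero]
    have hsplit : F a b (c + (k:ℂ)) - 1 = ∑' n : ℕ, T a b (c + k) (n+1) := by
      rw [F, Summable.tsum_eq_zero_add hsum, hT0, add_sub_cancel_left]
    rw [hsplit]
    have hterm : ∀ n : ℕ, ‖T a b (c + k) (n+1)‖ ≤ (K / ((k:ℝ) - s)) * QQ (n+1) := by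
      intro n
      calc ‖T a b (c + k) (n+1)‖
          ≤ ∏ j ∈ Finset.range (n+1), ((M + (j:ℝ))^2 / ((((k:ℝ) - s) + j) * (1 + j))) :=
            T_norm_le a b c hMa hMb (le_refl s) hks1 (n+1)
        _ ≤ (K / ((k:ℝ) - s)) * QQ (n+1) := prod_ratio_le hM0 (by linarith) hKks n
    calc ‖∑' n : ℕ, T a b (c + k) (n+1)‖
        ≤ ∑' n : ℕ, ‖T a b (c + k) (n+1)‖ := by
          apply norm_tsum_le_tsum_norm
          exact (summable_norm_iff.2 ((summable_nat_add_iff 1).2 hsum))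
      _ ≤ ∑' n : ℕ, (K / ((k:ℝ) - s)) * QQ (n+1) := by
          apply Summable.tsum_le_tsum hterm (summable_norm_iff.2 ((summable_nat_add_iff 1).2 hsum))
            (hQQsum1.mul_left _)
      _ = (K * S) / ((k:ℝ) - s) := by
          rw [tsum_mul_left, div_mul_eq_mul_div]
  have hg : Tendsto (fun k : ℕ => (K * S) / ((k:ℝ) - s)) atTop (𝓝 0) := by
    apply Tendsto.div_atTop tendsto_const_nhds
    exact tendsto_atTop_add_const_right atTop (-s) tendsto_natCast_atTop_atTop
  have := squeeze_zero_norm' hbound hg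
  have h2 : Tendsto (fun k : ℕ => (F a b (c + k) - 1) + 1) atTop (𝓝 (0 + 1)) :=
    this.add tendsto_const_nhds
  simpa using h2

theorem gauss_summation' (a b c : ℂ) (hc : ∀ n : ℕ, c ≠ -(n : ℂ))
    (h : 0 < (c - a - b).re) : F a b c = G a b c := by
  have hGlim := G_shift_tendsto a b c hc h
  have hFlim := F_shift_tendsto a b c hc h
  have hGne : ∀ᶠ k : ℕ in atTop, G a b (c + k) ≠ 0 := hGlim.eventually_ne one_ne_zero
  have hconst : ∀ᶠ k : ℕ in atTop,
      G a b c / G a b (c + k) * (F a b (c + k) - G a b (c + k)) = F a b c - G a b c := by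
    filter_upwards [hGne] with k hkne
    have h1 := iter_F a b c hc h k
    have h2 := iter_G a b c hc h k
    have h3 : (∏ j ∈ Finset.range k, R a b (c + j)) = G a b c / G a b (c + k) :=
      (eq_div_iff hkne).2 h2.symm
    rw [h1, h2, h3]
    field_simp
  have hlim : Tendsto (fun k : ℕ => G a b c / G a b (c + k) * (F a b (c + k) - G a b (c + k)))
      atTop (𝓝 (G a b c / 1 * (1 - 1))) :=
    (tendsto_const_nhds.div hGlim one_ne_zero).mul (hFlim.sub hGlim)
  have hconstlim : Tendsto (fun _ : ℕ => F a b c - G a b c) atTop (𝓝 (G a b c / 1 * (1 - 1))) :=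
    Filter.Tendsto.congr' hconst hlim
  have hzero : F a b c - G a b c = G a b c / 1 * (1 - 1) :=
    tendsto_nhds_unique tendsto_const_nhds hconstlim
  have : F a b c - G a b c = 0 := by rw [hzero]; ring
  linear_combination this

/-- Gauss summation theorem: `₂F₁(a,b;c;1) = Γ(c)Γ(c−a−b)/(Γ(c−a)Γ(c−b))`
when `Re(c−a−b) > 0` and `c` is not a nonpositive integer. -/
theorem gauss_summation (a b c : ℂ) (hc : ∀ n : ℕ, c ≠ -(n : ℂ))
    (h : 0 < (c - a - b).re) :
    hyp2F1 a b c 1 =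
      Complex.Gamma c * Complex.Gamma (c - a - b) /
        (Complex.Gamma (c - a) * Complex.Gamma (c - b)) := by
  have hF : hyp2F1 a b c 1 = F a b c := by
    simp only [hyp2F1, F, T, P, one_pow, mul_one]
  rw [hF, gauss_summation' a b c hc h, G]
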